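/- arXiv:math/0507009 — 2 statements merged into one kernel-verified Lean document; each statement's English description precedes it below -/
import Mathlib

section
/- Let L/K be a finite Galois extension of fields with Galois group G = Gal(L/K), and regard L, with its additive structure and the natural G-action, as a representation of G over K. Then the group cohomology H^i(G, L) vanishes for every i > 0. -/
open CategoryTheory groupCohomology

noncomputable section
namespace Stmt8Aux

/-! ### Fin tuple lemmas -/

section FinLemmas

variable {α : Type*} [Mul α] {n : ℕ}

theorem snoc_zero' (g : Fin (n+1) → α) (τ : α) : (Fin.snoc g τ : Fin (n+2) → α) 0 = g 0 := by
  conv_lhs => rw [← Fin.castSucc_zero, Fin.snoc_castSucc]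

theorem tail_snoc' (g : Fin (n+1) → α) (τ : α) :
    Fin.tail (Fin.snoc g τ : Fin (n+2) → α) = Fin.snoc (Fin.tail g) τ := by
  funext k
  refine Fin.lastCases ?_ (fun k' => ?_) k
  · show (Fin.snoc g τ : Fin (n+2) → α) (Fin.last n).succ = _
    rw [Fin.succ_last, Fin.snoc_last, Fin.snoc_last]
  · show (Fin.snoc g τ : Fin (n+2) → α) (Fin.castSucc k').succ = _
    rw [Fin.succ_castSucc, Fin.snoc_castSucc, Fin.snoc_castSucc]
    rfl

theorem contract_last (g : Fin (n+1) → α) :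
    Fin.contractNth (Fin.last n) (· * ·) g = Fin.init g := by
  funext k
  rw [Fin.contractNth_apply_of_lt _ _ _ _ k.isLt]
  rfl

theorem contract_last_snoc (g : Fin (n+1) → α) (τ : α) :
    Fin.contractNth (Fin.last (n+1)) (· * ·) (Fin.snoc g τ) = g := by
  funext k
  rw [Fin.contractNth_apply_of_lt _ _ _ _ k.isLt, Fin.snoc_castSucc]

theorem contract_castSucc_last_snoc (g : Fin (n+1) → α) (τ : α) :
    Fin.contractNth (Fin.castSucc (Fin.last n)) (· * ·) (Fin.snoc g τ)
      = Fin.snoc (Fin.init g) (g (Fin.last n) * τ) := by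
  funext k
  refine Fin.lastCases ?_ (fun k' => ?_) k
  · rw [Fin.contractNth_apply_of_eq _ _ _ _ rfl, Fin.snoc_castSucc, Fin.succ_last,
      Fin.snoc_last, Fin.snoc_last]
  · rw [Fin.contractNth_apply_of_lt _ _ _ _ (by simpa using k'.isLt), Fin.snoc_castSucc,
      Fin.snoc_castSucc]
    rfl

theorem contract_castSucc_castSucc_snoc (j : Fin n) (g : Fin (n+1) → α) (τ : α) :
    Fin.contractNth (Fin.castSucc (Fin.castSucc j)) (· * ·) (Fin.snoc g τ)
      = Fin.snoc (Fin.contractNth (Fin.castSucc j) (· * ·) g) τ := by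
  funext k
  refine Fin.lastCases ?_ (fun k' => ?_) k
  · rw [Fin.contractNth_apply_of_gt _ _ _ _ (by simpa using j.isLt),
      Fin.succ_last, Fin.snoc_last, Fin.snoc_last]
  · rw [Fin.snoc_castSucc]
    rcases lt_trichotomy (k' : ℕ) (j : ℕ) with h | h | h
    · rw [Fin.contractNth_apply_of_lt _ _ _ _ (by simpa using h),
        Fin.contractNth_apply_of_lt _ _ _ _ (by simpa using h), Fin.snoc_castSucc]
    · rw [Fin.contractNth_apply_of_eq _ _ _ _ (by simpa using h),
        Fin.contractNth_apply_of_eq _ _ _ _ (by simpa using h), Fin.snoc_castSucc,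
        Fin.succ_castSucc, Fin.snoc_castSucc]
    · rw [Fin.contractNth_apply_of_gt _ _ _ _ (by simpa using h),
        Fin.contractNth_apply_of_gt _ _ _ _ (by simpa using h),
        Fin.succ_castSucc, Fin.snoc_castSucc]

theorem contract_zero (g : Fin (n+2) → α) :
    Fin.contractNth 0 (· * ·) g = Fin.cons (g 0 * g 1) (fun k => g k.succ.succ) := by
  funext k
  refine Fin.cases ?_ (fun k' => ?_) k
  · rw [Fin.contractNth_apply_of_eq _ _ _ _ rfl, Fin.cons_zero, Fin.castSucc_zero,
      Fin.succ_zero_eq_one]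
  · rw [Fin.contractNth_apply_of_gt _ _ _ _ (by simp), Fin.cons_succ]

theorem contract_succ (j : Fin (n+1)) (g : Fin (n+2) → α) :
    Fin.contractNth j.succ (· * ·) g = Fin.cons (g 0) (Fin.contractNth j (· * ·) (Fin.tail g)) := by
  funext k
  refine Fin.cases ?_ (fun k' => ?_) k
  · rw [Fin.contractNth_apply_of_lt _ _ _ _ (by simp), Fin.cons_zero, Fin.castSucc_zero]
  · rw [Fin.cons_succ]
    rcases lt_trichotomy (k' : ℕ) (j : ℕ) with h | h | h
    · rw [Fin.contractNth_apply_of_lt _ _ _ _ (by simpa using h),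
        Fin.contractNth_apply_of_lt _ _ _ _ (by simpa using h)]
      show g _ = g _
      rw [Fin.succ_castSucc]
    · rw [Fin.contractNth_apply_of_eq _ _ _ _ (by simpa using h),
        Fin.contractNth_apply_of_eq _ _ _ _ (by simpa using h)]
      show _ * g _ = g _ * _
      rw [Fin.succ_castSucc]
      rfl
    · rw [Fin.contractNth_apply_of_gt _ _ _ _ (by simpa using h),
        Fin.contractNth_apply_of_gt _ _ _ _ (by simpa using h)]
      rfl

end FinLemmas

/-! ### ordered products -/

section Prod

variable {G' : Type*} [Monoid G'] {n : ℕ}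

/-- ordered product of a tuple -/
def P {n : ℕ} (g : Fin n → G') : G' := (List.ofFn g).prod

theorem P_cons (a : G') (v : Fin n → G') : P (Fin.cons a v) = a * P v := by
  simp [P, List.ofFn_succ]

theorem P_tail (g : Fin (n+1) → G') : g 0 * P (Fin.tail g) = P g := by
  simp only [P]
  rw [List.ofFn_succ, List.prod_cons]
  rfl

theorem P_snoc (g : Fin n → G') (τ : G') : P (Fin.snoc g τ) = P g * τ := by
  simp only [P]
  rw [List.ofFn_succ', List.prod_concat, Fin.snoc_last]
  simp only [Fin.snoc_castSucc]

theorem P_init (g : Fin (n+1) → G') : P (Fin.init g) * g (Fin.last n) = P g := by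
  conv_rhs => rw [← Fin.snoc_init_self g]
  rw [P_snoc]

theorem P_contract' : ∀ {n : ℕ} (j : Fin (n+1)) (g : Fin (n+1) → G'), (j : ℕ) < n →
    P (Fin.contractNth j (· * ·) g) = P g := by
  intro n
  induction n with
  | zero => exact fun j g hj => absurd hj (by omega)
  | succ m ih =>
    intro j g hj
    rcases Fin.eq_zero_or_eq_succ j with rfl | ⟨j', rfl⟩
    · rw [contract_zero, P_cons, ← P_tail g, ← P_tail (Fin.tail g), ← mul_assoc]
      have h1 : Fin.tail g 0 = g 1 := by
        show g (Fin.succ 0) = g 1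
        rw [Fin.succ_zero_eq_one]
      rw [h1]
      rfl
    · rw [contract_succ, P_cons, ih j' (Fin.tail g) (by rw [Fin.val_succ] at hj; omega),
        P_tail]

theorem P_contract (j : Fin n) (g : Fin (n+1) → G') :
    P (Fin.contractNth (Fin.castSucc j) (· * ·) g) = P g :=
  P_contract' (Fin.castSucc j) g (by simpa using j.isLt)

end Prod

/-! ### the main computation -/

variable {K L : Type} [Field K] [Field L] [Algebra K L] [FiniteDimensional K L]

/-- the differential, with plain types -/
def dd (ρ : Representation K (L ≃ₐ[K] L) L) (n : ℕ) :
    ((Fin n → (L ≃ₐ[K] L)) → L) → ((Fin (n+1) → (L ≃ₐ[K] L)) → L) :=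
  fun f => inhomogeneousCochains.d (Rep.of ρ) n f

theorem dd_apply (ρ : Representation K (L ≃ₐ[K] L) L) (n : ℕ)
    (f : (Fin n → (L ≃ₐ[K] L)) → L) (g : Fin (n+1) → (L ≃ₐ[K] L)) :
    dd ρ n f g = ρ (g 0) (f (Fin.tail g))
      + ∑ j : Fin (n+1), (-1:K)^((j:ℕ)+1) • f (Fin.contractNth j (· * ·) g) :=
  rfl

/-- the contracting homotopy -/
def hh (c : L) (n : ℕ) (f : (Fin (n+1) → (L ≃ₐ[K] L)) → L) : (Fin n → (L ≃ₐ[K] L)) → L :=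
  fun g => (-1 : K)^(n+1) • ∑ τ : L ≃ₐ[K] L, (P g * τ) c * f (Fin.snoc g τ)

theorem key (ρ : Representation K (L ≃ₐ[K] L) L) (hρ : ∀ (g : L ≃ₐ[K] L) (x : L), ρ g x = g x)
    (c : L) (hc : ∑ τ : L ≃ₐ[K] L, τ c = 1) (n : ℕ)
    (f : (Fin (n+1) → (L ≃ₐ[K] L)) → L) (g : Fin (n+1) → (L ≃ₐ[K] L)) :
    dd ρ n (hh c n f) g + hh c (n+1) (dd ρ (n+1) f) g = f g := by
  have ksmul : ∀ (m : ℕ) (x : L), ((-1:K)^m • x) = (-1:L)^m * x := by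
    intro m x
    rw [Algebra.smul_def, map_pow, map_neg, map_one]
  -- atoms
  set a : L := ∑ τ : L ≃ₐ[K] L, (P g * τ) c * (g 0) (f (Fin.snoc (Fin.tail g) τ)) with ha
  set b : Fin n → L := fun j => ∑ τ : L ≃ₐ[K] L,
    (P g * τ) c * f (Fin.snoc (Fin.contractNth (Fin.castSucc j) (· * ·) g) τ) with hb
  set s3 : L := ∑ τ : L ≃ₐ[K] L, (P (Fin.init g) * τ) c * f (Fin.snoc (Fin.init g) τ) with hs3
  -- T1
  have hT1 : ρ (g 0) (hh c n f (Fin.tail g)) = (-1:L)^(n+1) * a := by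
    rw [hρ]
    show (g 0) ((-1 : K)^(n+1) • ∑ τ : L ≃ₐ[K] L, (P (Fin.tail g) * τ) c * f (Fin.snoc (Fin.tail g) τ)) = _
    rw [ksmul, map_mul, map_pow, map_neg, map_one, map_sum, ha]
    congr 1
    refine Finset.sum_congr rfl fun τ _ => ?_
    rw [map_mul, ← AlgEquiv.mul_apply, ← mul_assoc, P_tail]
  -- T2
  have hT2 : (∑ j : Fin (n+1), (-1:K)^((j:ℕ)+1) • hh c n f (Fin.contractNth j (· * ·) g))
      = (∑ j : Fin n, (-1:L)^((j:ℕ)+n) * b j) + s3 := by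
    rw [Fin.sum_univ_castSucc]
    congr 1
    · refine Finset.sum_congr rfl fun j _ => ?_
      show (-1:K)^(((Fin.castSucc j):ℕ)+1) •
        ((-1:K)^(n+1) • ∑ τ : L ≃ₐ[K] L,
          (P (Fin.contractNth (Fin.castSucc j) (· * ·) g) * τ) c
            * f (Fin.snoc (Fin.contractNth (Fin.castSucc j) (· * ·) g) τ)) = _
      rw [ksmul, ksmul]
      simp only [P_contract, Fin.coe_castSucc]
      rw [← mul_assoc, ← pow_add, show ((j:ℕ)+1)+(n+1) = ((j:ℕ)+n)+2 by omega, pow_add]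
      simp only [hb]
      norm_num
    · show (-1:K)^(((Fin.last n):ℕ)+1) •
        ((-1:K)^(n+1) • ∑ τ : L ≃ₐ[K] L,
          (P (Fin.contractNth (Fin.last n) (· * ·) g) * τ) c
            * f (Fin.snoc (Fin.contractNth (Fin.last n) (· * ·) g) τ)) = _
      rw [ksmul, ksmul]
      simp only [contract_last, Fin.val_last]
      rw [← mul_assoc, ← pow_add, show (n+1)+(n+1) = 2*(n+1) by omega, pow_mul]
      rw [hs3]
      norm_num
  -- per-τ expansion of the last differential
  have hτ : ∀ τ : L ≃ₐ[K] L, (P g * τ) c * (dd ρ (n+1) f (Fin.snoc g τ))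
      = (P g * τ) c * (g 0) (f (Fin.snoc (Fin.tail g) τ))
      + ((∑ j : Fin n, (P g * τ) c
            * ((-1:L)^((j:ℕ)+1) * f (Fin.snoc (Fin.contractNth (Fin.castSucc j) (· * ·) g) τ)))
        + (P g * τ) c * ((-1:L)^(n+1) * f (Fin.snoc (Fin.init g) (g (Fin.last n) * τ))))
      + (P g * τ) c * ((-1:L)^(n+2) * f g) := by
    intro τ
    rw [dd_apply, snoc_zero', hρ, tail_snoc']
    rw [Fin.sum_univ_castSucc]
    rw [Fin.sum_univ_castSucc]
    simp only [contract_castSucc_castSucc_snoc, contract_castSucc_last_snoc,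
      contract_last_snoc, ksmul, Fin.coe_castSucc, Fin.val_last]
    rw [mul_add, mul_add, mul_add, Finset.mul_sum]
    ring
  -- T3
  have hT3 : hh c (n+1) (dd ρ (n+1) f) g
      = (-1:L)^n * a + (∑ j : Fin n, (-1:L)^(n+(j:ℕ)+1) * b j)
        + ((-1:L)^(2*n+1) * s3 + f g) := by
    show (-1 : K)^(n+2) • ∑ τ : L ≃ₐ[K] L, (P g * τ) c * (dd ρ (n+1) f (Fin.snoc g τ)) = _
    rw [ksmul]
    rw [Finset.sum_congr rfl fun τ _ => hτ τ]
    rw [Finset.sum_add_distrib, Finset.sum_add_distrib, Finset.sum_add_distrib]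
    have e1 : ∑ τ : L ≃ₐ[K] L, ∑ j : Fin n, (P g * τ) c
        * ((-1:L)^((j:ℕ)+1) * f (Fin.snoc (Fin.contractNth (Fin.castSucc j) (· * ·) g) τ))
        = ∑ j : Fin n, (-1:L)^((j:ℕ)+1) * b j := by
      rw [Finset.sum_comm]
      refine Finset.sum_congr rfl fun j _ => ?_
      simp only [hb]
      rw [Finset.mul_sum]
      exact Finset.sum_congr rfl fun τ _ => by ring
    have e2 : ∑ τ : L ≃ₐ[K] L, (P g * τ) c
        * ((-1:L)^(n+1) * f (Fin.snoc (Fin.init g) (g (Fin.last n) * τ)))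
        = (-1:L)^(n+1) * s3 := by
      have hre : ∑ τ : L ≃ₐ[K] L, (P g * τ) c * f (Fin.snoc (Fin.init g) (g (Fin.last n) * τ))
          = s3 := by
        rw [hs3, ← Equiv.sum_comp (Equiv.mulLeft (g (Fin.last n)))
          (fun σ => (P (Fin.init g) * σ) c * f (Fin.snoc (Fin.init g) σ))]
        refine Finset.sum_congr rfl fun τ _ => ?_
        simp only [Equiv.coe_mulLeft]
        rw [← mul_assoc, P_init]
      have h5 : ∑ τ : L ≃ₐ[K] L, (P g * τ) c
          * ((-1:L)^(n+1) * f (Fin.snoc (Fin.init g) (g (Fin.last n) * τ)))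
          = (-1:L)^(n+1) * ∑ τ : L ≃ₐ[K] L,
              (P g * τ) c * f (Fin.snoc (Fin.init g) (g (Fin.last n) * τ)) := by
        rw [Finset.mul_sum]
        exact Finset.sum_congr rfl fun τ _ => by ring
      rw [h5, hre]
    have e3 : ∑ τ : L ≃ₐ[K] L, (P g * τ) c * ((-1:L)^(n+2) * f g)
        = (-1:L)^(n+2) * f g := by
      have htr : ∑ τ : L ≃ₐ[K] L, (P g * τ) c = 1 := by
        rw [show (∑ τ : L ≃ₐ[K] L, (P g * τ) c)
            = ∑ τ : L ≃ₐ[K] L, (fun σ : L ≃ₐ[K] L => σ c) ((Equiv.mulLeft (P g)) τ) from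
          Finset.sum_congr rfl fun τ _ => by simp [Equiv.coe_mulLeft]]
        rw [Equiv.sum_comp (Equiv.mulLeft (P g)) (fun σ : L ≃ₐ[K] L => σ c)]
        exact hc
      rw [← Finset.sum_mul, htr, one_mul]
    have hc1 : (-1:L)^(n+2) * a = (-1:L)^n * a := by
      rw [pow_add]
      ring
    have hc2 : ∀ j : Fin n, (-1:L)^(n+2) * ((-1:L)^((j:ℕ)+1) * b j)
        = (-1:L)^(n+(j:ℕ)+1) * b j := by
      intro j
      rw [← mul_assoc, ← pow_add, show (n+2)+((j:ℕ)+1) = (n+(j:ℕ)+1)+2 by omega, pow_add]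
      norm_num
    have hc3 : (-1:L)^(n+2) * ((-1:L)^(n+1) * s3) = (-1:L)^(2*n+1) * s3 := by
      rw [← mul_assoc, ← pow_add, show (n+2)+(n+1) = (2*n+1)+2 by omega, pow_add]
      norm_num
    have hc4 : (-1:L)^(n+2) * ((-1:L)^(n+2) * f g) = f g := by
      rw [← mul_assoc, ← pow_add, show (n+2)+(n+2) = 2*(n+2) by omega, pow_mul]
      norm_num
    have hS : (-1:L)^(n+2) * (∑ j : Fin n, (-1:L)^((j:ℕ)+1) * b j)
        = ∑ j : Fin n, (-1:L)^(n+(j:ℕ)+1) * b j := by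
      rw [Finset.mul_sum]
      exact Finset.sum_congr rfl fun j _ => hc2 j
    rw [e1, e2, e3, ← ha, mul_add, mul_add, mul_add, hS, hc1, hc3, hc4]
    ring
  -- assemble
  rw [dd_apply, hT1, hT2, hT3]
  have hcomb : (∑ j : Fin n, (-1:L)^((j:ℕ)+n) * b j)
      + (∑ j : Fin n, (-1:L)^(n+(j:ℕ)+1) * b j) = 0 := by
    rw [← Finset.sum_add_distrib]
    refine Finset.sum_eq_zero fun j _ => ?_
    rw [show n+(j:ℕ)+1 = ((j:ℕ)+n)+1 by omega, pow_succ]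
    ring
  have h2n1 : (-1:L)^(2*n+1) = -1 := by
    rw [pow_succ, pow_mul]
    norm_num
  rw [h2n1]
  linear_combination hcomb

end Stmt8Aux


/-- For a finite Galois extension `L/K`, the group cohomology of the Galois group
`G = Gal(L/K)` with coefficients in `L` (the additive group of `L`, with its natural
`G`-action, viewed as a `K`-linear representation) vanishes in positive degrees. -/
theorem stmt_8 (K L : Type) [Field K] [Field L] [Algebra K L]
    [FiniteDimensional K L] [IsGalois K L]
    (ρ : Representation K (L ≃ₐ[K] L) L) (hρ : ∀ (g : L ≃ₐ[K] L) (x : L), ρ g x = g x)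
    (i : ℕ) (hi : 0 < i) :
    Subsingleton (groupCohomology (Rep.of ρ) i) := by
  obtain ⟨n, rfl⟩ : ∃ n, i = n + 1 := ⟨i - 1, by omega⟩
  obtain ⟨c, hc⟩ : ∃ c : L, ∑ τ : L ≃ₐ[K] L, τ c = 1 := by
    obtain ⟨c, hc⟩ := Algebra.trace_surjective K L 1
    exact ⟨c, by rw [← trace_eq_sum_automorphisms, hc, map_one]⟩
  set A := Rep.of ρ with hA
  have hex : (inhomogeneousCochains A).ExactAt (n+1) := by
    rw [(inhomogeneousCochains A).exactAt_iff' n (n+1) (n+2)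
      ((ComplexShape.up ℕ).prev_eq' rfl) ((ComplexShape.up ℕ).next_eq' rfl)]
    rw [ShortComplex.moduleCat_exact_iff]
    intro x hx
    have hx' : Stmt8Aux.dd ρ (n+1) x = fun _ => (0:L) := by
      have : (inhomogeneousCochains A).d (n+1) (n+2) x = 0 := hx
      rw [inhomogeneousCochains.d_def] at this
      funext y
      exact congrFun this y
    refine ⟨Stmt8Aux.hh c n x, ?_⟩
    show (inhomogeneousCochains A).d n (n+1) (Stmt8Aux.hh c n x) = x
    rw [inhomogeneousCochains.d_def]
    funext g
    have h2 := Stmt8Aux.key ρ hρ c hc n x g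
    rw [hx'] at h2
    have h4 : Stmt8Aux.hh c (n+1) (fun _ => (0:L)) g = 0 := by
      simp [Stmt8Aux.hh]
    rw [h4, add_zero] at h2
    exact h2
  have hzero : Limits.IsZero ((inhomogeneousCochains A).homology (n+1)) :=
    ((inhomogeneousCochains A).exactAt_iff_isZero_homology (n+1)).1 hex
  show Subsingleton ((inhomogeneousCochains A).homology (n+1))
  set X := (inhomogeneousCochains A).homology (n+1) with hX
  let e : X ≅ ModuleCat.of K PUnit :=
    hzero.iso (ModuleCat.isZero_of_subsingleton (ModuleCat.of K PUnit))
  have h : ∀ x : X, e.inv (e.hom x) = x := fun x => by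
    have h5 := e.hom_inv_id
    calc e.inv (e.hom x) = (e.hom ≫ e.inv) x := rfl
      _ = (𝟙 X) x := by rw [h5]
      _ = x := rfl
  constructor
  intro a b
  rw [← h a, ← h b, Subsingleton.elim (e.hom a) (e.hom b)]
end
end

section
/- Let p be a prime. The ring of formal power series ℤ_p[[T]] is isomorphic, as a topological ring, to the inverse limit lim_m ℤ_p[X]/((1+X)^{p^m} − 1) of the quotients of the polynomial ring ℤ_p[X] by the ideals ((1+X)^{p^m} − 1), where the transition maps are the natural quotient maps; the isomorphism sends T to the compatible family of residue classes of X. Equivalently, ℤ_p[[T]] is isomorphic to the inverse limit lim_m ℤ_p[ℤ/p^mℤ] of the group algebras of the cyclic groups ℤ/p^mℤ over ℤ_p, with transition maps induced by the quotient maps ℤ/p^{m+1}ℤ → ℤ/p^mℤ, via T ↦ (generator) − 1. -/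
noncomputable section

variable (p : ℕ) [Fact p.Prime]

/-- The ideal `((1+X)^{p^m} - 1)` of the polynomial ring `ℤ_p[X]`. -/
def cycIdeal (m : ℕ) : Ideal (Polynomial ℤ_[p]) :=
  Ideal.span {((1 + Polynomial.X : Polynomial ℤ_[p]) ^ p ^ m - 1)}

/-- `(1+X)^{p^{m'}} - 1` divides `(1+X)^{p^m} - 1` for `m' ≤ m`, so the ideals are nested. -/
lemma cycIdeal_antitone {m' m : ℕ} (h : m' ≤ m) : cycIdeal p m ≤ cycIdeal p m' := by
  rw [cycIdeal, cycIdeal, Ideal.span_le, Set.singleton_subset_iff, SetLike.mem_coe,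
    Ideal.mem_span_singleton]
  have h1 : p ^ m = p ^ m' * p ^ (m - m') := by rw [← pow_add, Nat.add_sub_cancel' h]
  have h2 := sub_dvd_pow_sub_pow ((1 + Polynomial.X : Polynomial ℤ_[p]) ^ p ^ m') 1
    (p ^ (m - m'))
  rw [one_pow, ← pow_mul, ← h1] at h2
  exact h2

/-- The natural transition (quotient) map for `m' ≤ m`, reduction modulo the larger ideal. -/
def cycTrans {m' m : ℕ} (h : m' ≤ m) :
    (Polynomial ℤ_[p] ⧸ cycIdeal p m) →+* Polynomial ℤ_[p] ⧸ cycIdeal p m' :=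
  Ideal.Quotient.factor (cycIdeal_antitone p h)

/-- The inverse limit `lim_m ℤ_p[X]/((1+X)^{p^m} - 1)`, realized as the subring of
compatible families in the product. -/
def cycLimit : Subring (∀ m, Polynomial ℤ_[p] ⧸ cycIdeal p m) where
  carrier := {f | ∀ (m' m : ℕ) (h : m' ≤ m), cycTrans p h (f m) = f m'}
  mul_mem' := by
    intro a b ha hb m' m h
    simp only [Pi.mul_apply, map_mul, ha m' m h, hb m' m h]
  one_mem' := by intro m' m h; simp only [Pi.one_apply, map_one]
  add_mem' := by
    intro a b ha hb m' m h
    simp only [Pi.add_apply, map_add, ha m' m h, hb m' m h]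
  zero_mem' := by intro m' m h; simp only [Pi.zero_apply, map_zero]
  neg_mem' := by
    intro a ha m' m h
    simp only [Pi.neg_apply, map_neg, ha m' m h]

/-- The product topology on `ℤ_p[X]` (coefficientwise). -/
instance polyTop : TopologicalSpace (Polynomial ℤ_[p]) :=
  TopologicalSpace.induced (fun f : Polynomial ℤ_[p] => (f.coeff : ℕ → ℤ_[p]))
    inferInstance

/-- The quotient topology on `ℤ_p[X]/((1+X)^{p^m} - 1)`. -/
instance cycQuotTop (m : ℕ) : TopologicalSpace (Polynomial ℤ_[p] ⧸ cycIdeal p m) :=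
  (polyTop p).coinduced (Ideal.Quotient.mk (cycIdeal p m))

/-- The product (coefficientwise) topology on `ℤ_p[[T]]`. -/
instance psTop : TopologicalSpace (PowerSeries ℤ_[p]) :=
  TopologicalSpace.induced (fun (f : PowerSeries ℤ_[p]) (n : ℕ) => PowerSeries.coeff n f)
    inferInstance

/-- The transition map `ℤ_p[ℤ/p^mℤ] → ℤ_p[ℤ/p^{m'}ℤ]` induced by the quotient map
`ℤ/p^mℤ → ℤ/p^{m'}ℤ` for `m' ≤ m`. -/
def grpTrans {m' m : ℕ} (h : m' ≤ m) :
    AddMonoidAlgebra ℤ_[p] (ZMod (p ^ m)) →+* AddMonoidAlgebra ℤ_[p] (ZMod (p ^ m')) :=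
  AddMonoidAlgebra.mapDomainRingHom ℤ_[p]
    ((ZMod.castHom (pow_dvd_pow p h) (ZMod (p ^ m'))).toAddMonoidHom)

/-- The inverse limit `lim_m ℤ_p[ℤ/p^mℤ]` of group algebras, realized as the subring of
compatible families in the product. -/
def grpLimit : Subring (∀ m, AddMonoidAlgebra ℤ_[p] (ZMod (p ^ m))) where
  carrier := {f | ∀ (m' m : ℕ) (h : m' ≤ m), grpTrans p h (f m) = f m'}
  mul_mem' := by
    intro a b ha hb m' m h
    simp only [Pi.mul_apply, map_mul, ha m' m h, hb m' m h]
  one_mem' := by intro m' m h; simp only [Pi.one_apply, map_one]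
  add_mem' := by
    intro a b ha hb m' m h
    simp only [Pi.add_apply, map_add, ha m' m h, hb m' m h]
  zero_mem' := by intro m' m h; simp only [Pi.zero_apply, map_zero]
  neg_mem' := by
    intro a ha m' m h
    simp only [Pi.neg_apply, map_neg, ha m' m h]

/-- The product topology on the group algebra `ℤ_p[ℤ/p^mℤ]` (coefficientwise). -/
instance grpAlgTop (m : ℕ) : TopologicalSpace (AddMonoidAlgebra ℤ_[p] (ZMod (p ^ m))) :=
  TopologicalSpace.induced
    (fun f : AddMonoidAlgebra ℤ_[p] (ZMod (p ^ m)) => (f.coeff : ZMod (p ^ m) → ℤ_[p]))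
    inferInstance

open Polynomial Filter Topology

namespace Iw

variable (p : ℕ) [Fact p.Prime]

lemma pp : p.Prime := Fact.out

/-! ### The distinguished polynomial ω -/

def ω (m : ℕ) : Polynomial ℤ_[p] := (1 + Polynomial.X) ^ p ^ m - 1

lemma cycIdeal_eq (m : ℕ) : cycIdeal p m = Ideal.span {ω p m} := rfl

lemma ω_mem (m : ℕ) : ω p m ∈ cycIdeal p m := by
  rw [cycIdeal_eq]; exact Ideal.subset_span rfl

lemma one_add_X_eq : (1 + Polynomial.X : Polynomial ℤ_[p]) = Polynomial.X + Polynomial.C 1 := by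
  rw [map_one, add_comm]

lemma one_add_X_pow_monic (m : ℕ) :
    ((1 + Polynomial.X : Polynomial ℤ_[p]) ^ p ^ m).Monic := by
  rw [one_add_X_eq]; exact (monic_X_add_C 1).pow _

lemma one_add_X_pow_degree (m : ℕ) :
    ((1 + Polynomial.X : Polynomial ℤ_[p]) ^ p ^ m).degree = (p ^ m : ℕ) := by
  rw [one_add_X_eq, degree_pow, degree_X_add_C]
  simp

lemma degree_one_lt (m : ℕ) :
    (1 : Polynomial ℤ_[p]).degree < ((1 + Polynomial.X : Polynomial ℤ_[p]) ^ p ^ m).degree := by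
  rw [degree_one, one_add_X_pow_degree]
  exact_mod_cast pow_pos (pp p).pos m

lemma ω_monic (m : ℕ) : (ω p m).Monic :=
  (one_add_X_pow_monic p m).sub_of_left (degree_one_lt p m)

lemma ω_degree (m : ℕ) : (ω p m).degree = (p ^ m : ℕ) := by
  rw [ω, degree_sub_eq_left_of_degree_lt (degree_one_lt p m), one_add_X_pow_degree]

/-! ### canonical representatives -/

def rep {m : ℕ} (q : Polynomial ℤ_[p] ⧸ cycIdeal p m) : Polynomial ℤ_[p] :=
  Function.surjInv Ideal.Quotient.mk_surjective q %ₘ ω p m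

lemma qmk_modByMonic (m : ℕ) (h : Polynomial ℤ_[p]) :
    Ideal.Quotient.mk (cycIdeal p m) (h %ₘ ω p m) = Ideal.Quotient.mk (cycIdeal p m) h := by
  rw [Ideal.Quotient.eq, cycIdeal_eq, Ideal.mem_span_singleton]
  exact ⟨-(h /ₘ ω p m), by rw [modByMonic_eq_sub_mul_div h (ω p m)]; ring⟩

lemma mk_rep {m : ℕ} (q : Polynomial ℤ_[p] ⧸ cycIdeal p m) :
    Ideal.Quotient.mk (cycIdeal p m) (rep p q) = q := by
  rw [rep, qmk_modByMonic]
  exact Function.surjInv_eq _ q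

lemma rep_mk (m : ℕ) (h : Polynomial ℤ_[p]) :
    rep p (Ideal.Quotient.mk (cycIdeal p m) h) = h %ₘ ω p m := by
  set h' := Function.surjInv (Ideal.Quotient.mk_surjective)
    (Ideal.Quotient.mk (cycIdeal p m) h) with hh'
  have h1 : Ideal.Quotient.mk (cycIdeal p m) h' = Ideal.Quotient.mk (cycIdeal p m) h :=
    Function.surjInv_eq _ _
  rw [Ideal.Quotient.eq, cycIdeal_eq, Ideal.mem_span_singleton] at h1
  have h0 : (h' - h) %ₘ ω p m = 0 := (modByMonic_eq_zero_iff_dvd (ω_monic p m)).mpr h1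
  rw [sub_modByMonic, sub_eq_zero] at h0
  exact h0

lemma degree_rep_lt (m : ℕ) (q : Polynomial ℤ_[p] ⧸ cycIdeal p m) :
    (rep p q).degree < ((p ^ m : ℕ) : WithBot ℕ) := by
  rw [← ω_degree p m]; exact degree_modByMonic_lt _ (ω_monic p m)

lemma rep_coeff_high (m : ℕ) (q : Polynomial ℤ_[p] ⧸ cycIdeal p m) {i : ℕ} (hi : p ^ m ≤ i) :
    (rep p q).coeff i = 0 := by
  apply coeff_eq_zero_of_degree_lt
  exact lt_of_lt_of_le (degree_rep_lt p m q) (by exact_mod_cast hi)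

lemma rep_injective (m : ℕ) :
    Function.Injective (rep p (m := m)) := fun a b h => by
  rw [← mk_rep p a, ← mk_rep p b, h]

/-! ### The binomial factorization -/

lemma X_pow_eq (m : ℕ) : ∃ g : Polynomial ℤ_[p],
    (Polynomial.X : Polynomial ℤ_[p]) ^ p ^ m = ω p m - Polynomial.C (p : ℤ_[p]) * g := by
  refine ⟨∑ k ∈ Finset.Ioo 0 (p ^ m),
    Polynomial.C (((p ^ m).choose k / p : ℕ) : ℤ_[p]) * Polynomial.X ^ k, ?_⟩
  have hc : ∀ j, ((1 + Polynomial.X : Polynomial ℤ_[p]) ^ p ^ m).coeff j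
      = (((p ^ m).choose j : ℕ) : ℤ_[p]) := by
    intro j; rw [add_comm]; exact coeff_X_add_one_pow ℤ_[p] (p ^ m) j
  ext j
  rw [ω, coeff_X_pow, coeff_sub, coeff_sub, hc, coeff_one, coeff_C_mul, finset_sum_coeff]
  simp only [coeff_C_mul, coeff_X_pow, mul_ite, mul_one, mul_zero]
  rw [Finset.sum_ite_eq (Finset.Ioo 0 (p ^ m)) j
    (fun k => (((p ^ m).choose k / p : ℕ) : ℤ_[p]))]
  have hd : 0 < p ^ m := pow_pos (pp p).pos m
  by_cases hj0 : j = 0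
  · subst hj0
    have h0N : ¬((0:ℕ) = p ^ m) := by omega
    simp [h0N, Nat.choose_zero_right]
  · by_cases hjN : j = p ^ m
    · subst hjN
      simp [Nat.choose_self, hj0, (pp p).ne_zero]
    · by_cases hlt : j < p ^ m
      · have hmem : j ∈ Finset.Ioo 0 (p ^ m) := by
          rw [Finset.mem_Ioo]; exact ⟨Nat.pos_of_ne_zero hj0, hlt⟩
        rw [if_neg hjN, if_neg hj0, if_pos hmem]
        have hdvd : p ∣ (p ^ m).choose j := (pp p).dvd_choose_pow hj0 hjN
        have : (p : ℤ_[p]) * (((p ^ m).choose j / p : ℕ) : ℤ_[p])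
            = (((p ^ m).choose j : ℕ) : ℤ_[p]) := by
          rw [← Nat.cast_mul, Nat.mul_div_cancel' hdvd]
        rw [this]; ring
      · have hgt : p ^ m < j := by omega
        have hnot : j ∉ Finset.Ioo 0 (p ^ m) := by
          rw [Finset.mem_Ioo]; omega
        rw [if_neg hjN, if_neg hj0, if_neg hnot, Nat.choose_eq_zero_of_lt hgt]
        simp

lemma mk_X_pow_d (m : ℕ) : ∃ z, Ideal.Quotient.mk (cycIdeal p m) (Polynomial.X ^ p ^ m) =
    Ideal.Quotient.mk (cycIdeal p m) (Polynomial.C (p : ℤ_[p])) * z := by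
  obtain ⟨g, hg⟩ := X_pow_eq p m
  refine ⟨Ideal.Quotient.mk _ (-g), ?_⟩
  rw [hg, map_sub, map_mul, Ideal.Quotient.eq_zero_iff_mem.mpr (ω_mem p m), zero_sub, map_neg]
  ring

lemma exists_pow_factor (m n : ℕ) : ∃ z, Ideal.Quotient.mk (cycIdeal p m) (Polynomial.X ^ n) =
    Ideal.Quotient.mk (cycIdeal p m) (Polynomial.C ((p : ℤ_[p]) ^ (n / p ^ m))) * z := by
  obtain ⟨w, hw⟩ := mk_X_pow_d p m
  refine ⟨w ^ (n / p ^ m) * Ideal.Quotient.mk _ (Polynomial.X ^ (n % p ^ m)), ?_⟩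
  conv_lhs => rw [show n = p ^ m * (n / p ^ m) + n % p ^ m from (Nat.div_add_mod n (p ^ m)).symm]
  rw [pow_add, pow_mul, map_mul, map_pow, hw, mul_pow, ← map_pow, ← C_pow]
  ring

/-! ### the coefficients c(m, n, i) and their norms -/

def cf (m n i : ℕ) : ℤ_[p] := ((Polynomial.X : Polynomial ℤ_[p]) ^ n %ₘ ω p m).coeff i

def bnd (m n : ℕ) : ℝ := (p : ℝ) ^ (-((n / p ^ m : ℕ) : ℤ))

lemma bnd_nonneg (m n : ℕ) : 0 ≤ bnd p m n := by
  apply zpow_nonneg; positivity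

lemma bnd_le_one (m n : ℕ) : bnd p m n ≤ 1 := by
  rw [bnd]
  apply zpow_le_one_of_nonpos₀
  · exact_mod_cast (pp p).one_lt.le
  · exact neg_nonpos.mpr (by positivity)

lemma bnd_anti (m : ℕ) {n n' : ℕ} (h : n ≤ n') : bnd p m n' ≤ bnd p m n := by
  apply zpow_le_zpow_right₀
  · exact_mod_cast (pp p).one_lt.le
  · simp only [neg_le_neg_iff, Nat.cast_le]
    exact Nat.div_le_div_right h

lemma tendsto_bnd (m : ℕ) : Tendsto (fun n => bnd p m n) atTop (𝓝 0) := by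
  have h1 : Tendsto (fun n : ℕ => n / p ^ m) atTop atTop := by
    apply tendsto_atTop_atTop.mpr
    intro b
    exact ⟨b * p ^ m, fun n hn => (Nat.le_div_iff_mul_le (pow_pos (pp p).pos m)).mpr hn⟩
  have h2 : Tendsto (fun k : ℕ => (p : ℝ) ^ (-(k : ℤ))) atTop (𝓝 0) := by
    have heq : ∀ k : ℕ, (p : ℝ) ^ (-(k : ℤ)) = ((p : ℝ)⁻¹) ^ k := by
      intro k; rw [zpow_neg, zpow_natCast, inv_pow]
    simp only [heq]
    apply tendsto_pow_atTop_nhds_zero_of_lt_one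
    · positivity
    · rw [inv_lt_one_iff₀]; right; exact_mod_cast (pp p).one_lt
  exact h2.comp h1

lemma norm_cf_le (m n i : ℕ) : ‖cf p m n i‖ ≤ bnd p m n := by
  obtain ⟨z, hz⟩ := exists_pow_factor p m n
  have key : cf p m n i = (p : ℤ_[p]) ^ (n / p ^ m) * (rep p z).coeff i := by
    have h1 : (Polynomial.X : Polynomial ℤ_[p]) ^ n %ₘ ω p m
        = rep p (Ideal.Quotient.mk (cycIdeal p m) (Polynomial.X ^ n)) := (rep_mk p m _).symm
    rw [cf, h1, hz]
    conv_lhs => rw [← mk_rep p z, ← map_mul, rep_mk, ← smul_eq_C_mul, smul_modByMonic,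
      (modByMonic_eq_self_iff (ω_monic p m)).mpr (by rw [ω_degree]; exact degree_rep_lt p m z)]
    rw [coeff_smul, smul_eq_mul]
  rw [key, norm_mul, PadicInt.norm_p_pow, bnd]
  exact mul_le_of_le_one_right (by positivity) (PadicInt.norm_le_one _)

lemma norm_cf_tendsto (m i : ℕ) : Tendsto (fun n => ‖cf p m n i‖) atTop (𝓝 0) :=
  squeeze_zero (fun _ => norm_nonneg _) (fun n => norm_cf_le p m n i) (tendsto_bnd p m)

lemma cf_of_lt (m : ℕ) {n : ℕ} (i : ℕ) (h : n < p ^ m) :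
    cf p m n i = if i = n then 1 else 0 := by
  rw [cf, (modByMonic_eq_self_iff (ω_monic p m)).mpr, coeff_X_pow]
  rw [ω_degree, degree_X_pow]
  exact_mod_cast h

lemma cf_high (m n : ℕ) {i : ℕ} (hi : p ^ m ≤ i) : cf p m n i = 0 := by
  apply coeff_eq_zero_of_degree_lt
  have h1 : ((Polynomial.X : Polynomial ℤ_[p]) ^ n %ₘ ω p m).degree < ((p ^ m : ℕ) : WithBot ℕ) := by
    rw [← ω_degree p m]; exact degree_modByMonic_lt _ (ω_monic p m)
  exact lt_of_lt_of_le h1 (by exact_mod_cast hi)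

/-! ### summability and tsums -/

lemma summable_mul {c : ℕ → ℤ_[p]} (hc : Tendsto (fun n => ‖c n‖) atTop (𝓝 0))
    (a : ℕ → ℤ_[p]) : Summable fun n => a n * c n := by
  apply NonarchimedeanAddGroup.summable_of_tendsto_cofinite_zero
  rw [Nat.cofinite_eq_atTop]
  apply squeeze_zero_norm (a := fun n => ‖c n‖) (fun n => ?_) hc
  rw [norm_mul]
  exact mul_le_of_le_one_left (norm_nonneg _) (PadicInt.norm_le_one _)

lemma summable_mul_cf (m i : ℕ) (a : ℕ → ℤ_[p]) :
    Summable fun n => a n * cf p m n i :=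
  summable_mul p (norm_cf_tendsto p m i) a

lemma norm_tsum_le {a : ℕ → ℤ_[p]} {C : ℝ} (hC : 0 ≤ C) (h : ∀ n, ‖a n‖ ≤ C) :
    ‖∑' n, a n‖ ≤ C :=
  IsUltrametricDist.norm_tsum_le_of_forall_le_of_nonneg hC h

/-! ### mod-omega coefficients as tsums -/

lemma modByMonic_sum (m : ℕ) (h : Polynomial ℤ_[p]) :
    h %ₘ ω p m = ∑ n ∈ h.support, h.coeff n • ((Polynomial.X : Polynomial ℤ_[p]) ^ n %ₘ ω p m) := by
  have h2 := map_sum (Polynomial.modByMonicHom (ω p m))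
    (fun i => Polynomial.monomial i (h.coeff i)) h.support
  calc h %ₘ ω p m = (∑ i ∈ h.support, Polynomial.monomial i (h.coeff i)) %ₘ ω p m := by
        conv_lhs => rw [Polynomial.as_sum_support h]
    _ = ∑ n ∈ h.support, (Polynomial.monomial n (h.coeff n)) %ₘ ω p m := h2
    _ = _ := by
        apply Finset.sum_congr rfl
        intro n _
        rw [← smul_X_eq_monomial, smul_modByMonic]

lemma modByMonic_coeff (m : ℕ) (h : Polynomial ℤ_[p]) (i : ℕ) :
    (h %ₘ ω p m).coeff i = ∑ n ∈ h.support, h.coeff n * cf p m n i := by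
  rw [modByMonic_sum, finset_sum_coeff]
  apply Finset.sum_congr rfl
  intro n _
  rw [coeff_smul, smul_eq_mul, cf]

lemma modByMonic_coeff_tsum (m : ℕ) (h : Polynomial ℤ_[p]) (i : ℕ) :
    (h %ₘ ω p m).coeff i = ∑' n, h.coeff n * cf p m n i := by
  rw [tsum_eq_sum (s := h.support) (fun b hb => by
    rw [Polynomial.notMem_support_iff.mp hb, zero_mul])]
  exact modByMonic_coeff p m h i

/-! ### topology: basic continuity -/

lemma continuous_coeffs : Continuous fun f : Polynomial ℤ_[p] => (f.coeff : ℕ → ℤ_[p]) :=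
  continuous_induced_dom

lemma continuous_psCoeffs :
    Continuous fun f : PowerSeries ℤ_[p] => (fun n => PowerSeries.coeff n f) :=
  continuous_induced_dom

lemma continuous_tsum_mul {c : ℕ → ℤ_[p]} (hc : Tendsto (fun n => ‖c n‖) atTop (𝓝 0)) :
    Continuous fun a : ℕ → ℤ_[p] => ∑' n, a n * c n := by
  have hcont : ∀ N : ℕ, Continuous fun a : ℕ → ℤ_[p] => ∑ n ∈ Finset.range N, a n * c n :=
    fun N => continuous_finset_sum _ fun n _ => ((continuous_apply n).mul continuous_const)
  have hunif : TendstoUniformly (fun (N : ℕ) (a : ℕ → ℤ_[p]) => ∑ n ∈ Finset.range N, a n * c n)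
      (fun a : ℕ → ℤ_[p] => ∑' n, a n * c n) atTop := by
    rw [Metric.tendstoUniformly_iff]
    intro ε hε
    obtain ⟨N₀, hN₀⟩ := (Metric.tendsto_atTop.mp hc (ε / 2) (by positivity))
    rw [eventually_atTop]
    refine ⟨N₀, fun N hN a => ?_⟩
    have hsum := summable_mul p hc a
    have hsplit := Summable.sum_add_tsum_nat_add (f := fun n => a n * c n) N hsum
    rw [dist_eq_norm, ← hsplit, add_sub_cancel_left]
    have htail : ‖∑' k, a (k + N) * c (k + N)‖ ≤ ε / 2 := by
      apply norm_tsum_le p (by positivity)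
      intro k
      have h1 : ‖c (k + N)‖ ≤ ε / 2 := by
        have := hN₀ (k + N) (le_trans hN (Nat.le_add_left N k))
        rw [Real.dist_eq, sub_zero, abs_of_nonneg (norm_nonneg _)] at this
        exact this.le
      rw [norm_mul]
      exact le_trans (mul_le_of_le_one_left (norm_nonneg _) (PadicInt.norm_le_one _)) h1
    exact lt_of_le_of_lt htail (by linarith)
  exact hunif.continuous (Filter.Eventually.of_forall hcont).frequently

lemma continuous_modCoeff (m i : ℕ) :
    Continuous fun h : Polynomial ℤ_[p] => (h %ₘ ω p m).coeff i := by
  have heq : (fun h : Polynomial ℤ_[p] => (h %ₘ ω p m).coeff i)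
      = (fun a : ℕ → ℤ_[p] => ∑' n, a n * cf p m n i)
        ∘ (fun h : Polynomial ℤ_[p] => (h.coeff : ℕ → ℤ_[p])) := by
    funext h; exact modByMonic_coeff_tsum p m h i
  rw [heq]
  exact (continuous_tsum_mul p (norm_cf_tendsto p m i)).comp (continuous_coeffs p)

/-! ### the coordinates of the quotient ring, and its topology -/

def coords (m : ℕ) (q : Polynomial ℤ_[p] ⧸ cycIdeal p m) : ℕ → ℤ_[p] :=
  fun i => (rep p q).coeff i

lemma coords_zero (m i : ℕ) : coords p m 0 i = 0 := by
  have h0 : (0 : Polynomial ℤ_[p] ⧸ cycIdeal p m)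
      = Ideal.Quotient.mk (cycIdeal p m) 0 := (map_zero _).symm
  rw [coords, h0, rep_mk, zero_modByMonic, coeff_zero]

lemma continuous_mkq (m : ℕ) : Continuous (Ideal.Quotient.mk (cycIdeal p m)) :=
  continuous_coinduced_rng

lemma continuous_coords (m : ℕ) : Continuous (coords p m) := by
  apply continuous_coinduced_dom.mpr
  apply continuous_pi
  intro i
  have heq : (fun h : Polynomial ℤ_[p] => coords p m (Ideal.Quotient.mk (cycIdeal p m) h) i)
      = fun h : Polynomial ℤ_[p] => (h %ₘ ω p m).coeff i := by
    funext h; rw [coords, rep_mk]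
  exact heq ▸ continuous_modCoeff p m i

lemma coords_injective (m : ℕ) : Function.Injective (coords p m) := by
  intro a b hab
  exact rep_injective p m (Polynomial.ext fun n => congrFun hab n)

lemma continuous_rep (m : ℕ) : Continuous (rep p (m := m)) :=
  continuous_induced_rng.mpr (continuous_coords p m)

lemma topEq (m : ℕ) : (cycQuotTop p m) = TopologicalSpace.induced (coords p m) inferInstance := by
  apply le_antisymm
  · exact continuous_iff_le_induced.mp (continuous_coords p m)
  · have hrep : Continuous[TopologicalSpace.induced (coords p m) inferInstance, polyTop p]
        (rep p (m := m)) := by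
      apply continuous_induced_rng.mpr
      exact continuous_induced_dom
    have hid : Continuous[TopologicalSpace.induced (coords p m) inferInstance, cycQuotTop p m]
        (fun q => q) := by
      have : (fun q : Polynomial ℤ_[p] ⧸ cycIdeal p m => q)
          = (Ideal.Quotient.mk (cycIdeal p m)) ∘ (rep p (m := m)) := by
        funext q; exact (mk_rep p q).symm
      rw [this]
      exact @Continuous.comp _ _ _ (TopologicalSpace.induced (coords p m) inferInstance)
        (polyTop p) (cycQuotTop p m) _ _ (continuous_mkq p m) hrep
    exact continuous_id_iff_le.mp hid

lemma inducing_coords (m : ℕ) : Topology.IsInducing (coords p m) := ⟨topEq p m⟩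

instance (m : ℕ) : T2Space (Polynomial ℤ_[p] ⧸ cycIdeal p m) :=
  Topology.IsEmbedding.t2Space ⟨inducing_coords p m, coords_injective p m⟩

lemma continuous_poly_mul :
    Continuous fun fg : Polynomial ℤ_[p] × Polynomial ℤ_[p] => fg.1 * fg.2 := by
  apply continuous_induced_rng.mpr
  apply continuous_pi
  intro n
  have heq : (fun fg : Polynomial ℤ_[p] × Polynomial ℤ_[p] => (fg.1 * fg.2).coeff n)
      = fun fg => ∑ x ∈ Finset.HasAntidiagonal.antidiagonal n, fg.1.coeff x.1 * fg.2.coeff x.2 := by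
    funext fg; exact Polynomial.coeff_mul _ _ _
  exact heq ▸ continuous_finset_sum _ fun x _ =>
    (((continuous_apply x.1).comp ((continuous_coeffs p).comp continuous_fst)).mul
      ((continuous_apply x.2).comp ((continuous_coeffs p).comp continuous_snd)))

lemma continuous_poly_add :
    Continuous fun fg : Polynomial ℤ_[p] × Polynomial ℤ_[p] => fg.1 + fg.2 := by
  apply continuous_induced_rng.mpr
  apply continuous_pi
  intro n
  have heq : (fun fg : Polynomial ℤ_[p] × Polynomial ℤ_[p] => (fg.1 + fg.2).coeff n)
      = fun fg => fg.1.coeff n + fg.2.coeff n := by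
    funext fg; exact Polynomial.coeff_add _ _ _
  exact heq ▸ (((continuous_apply n).comp ((continuous_coeffs p).comp continuous_fst)).add
      ((continuous_apply n).comp ((continuous_coeffs p).comp continuous_snd)))

lemma continuous_poly_neg : Continuous fun f : Polynomial ℤ_[p] => -f := by
  apply continuous_induced_rng.mpr
  apply continuous_pi
  intro n
  have heq : (fun f : Polynomial ℤ_[p] => (-f).coeff n) = fun f => -(f.coeff n) := by
    funext f; exact Polynomial.coeff_neg _ _
  exact heq ▸ ((continuous_apply n).comp (continuous_coeffs p)).neg

instance (m : ℕ) : ContinuousAdd (Polynomial ℤ_[p] ⧸ cycIdeal p m) := by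
  constructor
  · have heq : (fun ab : (Polynomial ℤ_[p] ⧸ cycIdeal p m) × (Polynomial ℤ_[p] ⧸ cycIdeal p m)
        => ab.1 + ab.2)
        = fun ab => Ideal.Quotient.mk (cycIdeal p m) (rep p ab.1 + rep p ab.2) := by
      funext ab; rw [map_add, mk_rep, mk_rep]
    rw [heq]
    exact (continuous_mkq p m).comp (continuous_poly_add p |>.comp
      (((continuous_rep p m).comp continuous_fst).prodMk ((continuous_rep p m).comp continuous_snd)))

instance (m : ℕ) : ContinuousMul (Polynomial ℤ_[p] ⧸ cycIdeal p m) := by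
  constructor
  · have heq : (fun ab : (Polynomial ℤ_[p] ⧸ cycIdeal p m) × (Polynomial ℤ_[p] ⧸ cycIdeal p m)
        => ab.1 * ab.2)
        = fun ab => Ideal.Quotient.mk (cycIdeal p m) (rep p ab.1 * rep p ab.2) := by
      funext ab; rw [map_mul, mk_rep, mk_rep]
    rw [heq]
    have hc := continuous_poly_mul p |>.comp
      (((continuous_rep p m).comp continuous_fst).prodMk ((continuous_rep p m).comp continuous_snd))
    exact (continuous_mkq p m).comp hc

instance (m : ℕ) : ContinuousNeg (Polynomial ℤ_[p] ⧸ cycIdeal p m) := by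
  constructor
  · have heq : (fun a : Polynomial ℤ_[p] ⧸ cycIdeal p m => -a)
        = fun a => Ideal.Quotient.mk (cycIdeal p m) (-(rep p a)) := by
      funext a; rw [map_neg, mk_rep]
    rw [heq]
    exact (continuous_mkq p m).comp ((continuous_poly_neg p).comp (continuous_rep p m))

instance (m : ℕ) : IsTopologicalRing (Polynomial ℤ_[p] ⧸ cycIdeal p m) :=
  haveI : IsTopologicalSemiring (Polynomial ℤ_[p] ⧸ cycIdeal p m) := IsTopologicalSemiring.mk
  IsTopologicalRing.mk

/-! ### the maps φ_m -/

def Sc (m i : ℕ) (f : PowerSeries ℤ_[p]) : ℤ_[p] :=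
  ∑' n, PowerSeries.coeff n f * cf p m n i

def Pm (m : ℕ) (f : PowerSeries ℤ_[p]) : Polynomial ℤ_[p] :=
  ∑ i ∈ Finset.range (p ^ m), Polynomial.C (Sc p m i f) * Polynomial.X ^ i

def phi (m : ℕ) (f : PowerSeries ℤ_[p]) : Polynomial ℤ_[p] ⧸ cycIdeal p m :=
  Ideal.Quotient.mk (cycIdeal p m) (Pm p m f)

lemma coeff_Pm (m : ℕ) (f : PowerSeries ℤ_[p]) (i : ℕ) :
    (Pm p m f).coeff i = if i < p ^ m then Sc p m i f else 0 := by
  rw [Pm, finset_sum_coeff]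
  simp only [coeff_C_mul, coeff_X_pow, mul_ite, mul_one, mul_zero]
  rw [Finset.sum_ite_eq (Finset.range (p ^ m)) i (fun k => Sc p m k f)]
  simp [Finset.mem_range]

lemma degree_Pm_lt (m : ℕ) (f : PowerSeries ℤ_[p]) :
    (Pm p m f).degree < ((p ^ m : ℕ) : WithBot ℕ) := by
  rw [degree_lt_iff_coeff_zero]
  intro j hj
  rw [coeff_Pm, if_neg (Nat.not_lt.mpr hj)]

lemma rep_phi (m : ℕ) (f : PowerSeries ℤ_[p]) : rep p (phi p m f) = Pm p m f := by
  rw [phi, rep_mk, (modByMonic_eq_self_iff (ω_monic p m)).mpr]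
  rw [ω_degree]; exact degree_Pm_lt p m f

lemma coords_phi (m : ℕ) (f : PowerSeries ℤ_[p]) (i : ℕ) :
    coords p m (phi p m f) i = if i < p ^ m then Sc p m i f else 0 := by
  rw [coords, rep_phi, coeff_Pm]

lemma coords_mk_trunc (m : ℕ) (f : PowerSeries ℤ_[p]) (N i : ℕ) :
    coords p m (Ideal.Quotient.mk (cycIdeal p m) (PowerSeries.trunc N f)) i
      = ∑ n ∈ Finset.range N, PowerSeries.coeff n f * cf p m n i := by
  rw [coords, rep_mk, modByMonic_coeff_tsum]
  rw [tsum_eq_sum (s := Finset.range N) (fun b hb => by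
    rw [PowerSeries.coeff_trunc, if_neg (fun hlt => hb (Finset.mem_range.mpr hlt)), zero_mul])]
  apply Finset.sum_congr rfl
  intro n hn
  rw [PowerSeries.coeff_trunc, if_pos (Finset.mem_range.mp hn)]

lemma tendsto_trunc (m : ℕ) (f : PowerSeries ℤ_[p]) :
    Tendsto (fun N => Ideal.Quotient.mk (cycIdeal p m) (PowerSeries.trunc N f)) atTop
      (𝓝 (phi p m f)) := by
  rw [(inducing_coords p m).tendsto_nhds_iff]
  rw [tendsto_pi_nhds]
  intro i
  by_cases hi : i < p ^ m
  · have hs : Tendsto (fun N => ∑ n ∈ Finset.range N, PowerSeries.coeff n f * cf p m n i)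
        atTop (𝓝 (Sc p m i f)) :=
      (summable_mul_cf p m i _).hasSum.tendsto_sum_nat
    rw [coords_phi, if_pos hi]
    exact Tendsto.congr (fun N => (coords_mk_trunc p m f N i).symm) hs
  · rw [coords_phi, if_neg hi]
    exact Tendsto.congr
      (fun N => (rep_coeff_high p m _ (Nat.not_lt.mp hi)).symm) tendsto_const_nhds

lemma phi_coe (m : ℕ) (h : Polynomial ℤ_[p]) :
    phi p m (h : PowerSeries ℤ_[p]) = Ideal.Quotient.mk (cycIdeal p m) h := by
  apply coords_injective p m
  funext i
  by_cases hi : i < p ^ m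
  · rw [coords_phi, if_pos hi, Sc]
    calc (∑' n, PowerSeries.coeff n (h : PowerSeries ℤ_[p]) * cf p m n i)
        = ∑' n, h.coeff n * cf p m n i :=
          tsum_congr fun n => by rw [Polynomial.coeff_coe]
      _ = (h %ₘ ω p m).coeff i := (modByMonic_coeff_tsum p m h i).symm
      _ = coords p m (Ideal.Quotient.mk (cycIdeal p m) h) i := by rw [coords, rep_mk]
  · rw [coords_phi, if_neg hi]
    exact (rep_coeff_high p m _ (Nat.not_lt.mp hi)).symm

lemma phi_one (m : ℕ) : phi p m 1 = 1 := by
  have h := phi_coe p m 1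
  rw [Polynomial.coe_one] at h
  rw [h, map_one]

lemma phi_zero (m : ℕ) : phi p m 0 = 0 := by
  have h := phi_coe p m 0
  rw [Polynomial.coe_zero] at h
  rw [h, map_zero]

lemma phi_X (m : ℕ) : phi p m PowerSeries.X = Ideal.Quotient.mk (cycIdeal p m) Polynomial.X := by
  have h := phi_coe p m Polynomial.X
  rw [Polynomial.coe_X] at h
  exact h

lemma Sc_add (m i : ℕ) (f g : PowerSeries ℤ_[p]) :
    Sc p m i (f + g) = Sc p m i f + Sc p m i g := by
  rw [Sc, Sc, Sc, ← Summable.tsum_add (summable_mul_cf p m i _) (summable_mul_cf p m i _)]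
  exact tsum_congr fun n => by rw [map_add, add_mul]

lemma phi_add (m : ℕ) (f g : PowerSeries ℤ_[p]) :
    phi p m (f + g) = phi p m f + phi p m g := by
  rw [phi, phi, phi, ← map_add]
  congr 1
  rw [Pm, Pm, Pm, ← Finset.sum_add_distrib]
  apply Finset.sum_congr rfl
  intro i _
  rw [Sc_add, map_add, add_mul]

lemma phi_mul (m : ℕ) (f g : PowerSeries ℤ_[p]) :
    phi p m (f * g) = phi p m f * phi p m g := by
  have h1 : Tendsto (fun N => Ideal.Quotient.mk (cycIdeal p m) (PowerSeries.trunc N f)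
      * Ideal.Quotient.mk (cycIdeal p m) (PowerSeries.trunc N g)) atTop
      (𝓝 (phi p m f * phi p m g)) :=
    (tendsto_trunc p m f).mul (tendsto_trunc p m g)
  have h2 : Tendsto (fun N => Ideal.Quotient.mk (cycIdeal p m) (PowerSeries.trunc N (f * g)))
      atTop (𝓝 (phi p m (f * g))) := tendsto_trunc p m (f * g)
  set D : ℕ → Polynomial ℤ_[p] :=
    fun N => PowerSeries.trunc N f * PowerSeries.trunc N g - PowerSeries.trunc N (f * g) with hD
  have hcoeff : ∀ N k, k < N → (D N).coeff k = 0 := by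
    intro N k hk
    rw [hD]
    simp only
    rw [coeff_sub, Polynomial.coeff_mul, PowerSeries.coeff_trunc, if_pos hk,
      PowerSeries.coeff_mul, sub_eq_zero]
    apply Finset.sum_congr rfl
    intro x hx
    have hx1 : x.1 < N := lt_of_le_of_lt (Finset.HasAntidiagonal.antidiagonal.fst_le hx) hk
    have hx2 : x.2 < N := lt_of_le_of_lt (Finset.HasAntidiagonal.antidiagonal.snd_le hx) hk
    rw [PowerSeries.coeff_trunc, if_pos hx1, PowerSeries.coeff_trunc, if_pos hx2]
  have h3 : Tendsto (fun N => (Ideal.Quotient.mk (cycIdeal p m) (PowerSeries.trunc N f)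
      * Ideal.Quotient.mk (cycIdeal p m) (PowerSeries.trunc N g))
      - Ideal.Quotient.mk (cycIdeal p m) (PowerSeries.trunc N (f * g))) atTop (𝓝 0) := by
    have hmk : ∀ N, Ideal.Quotient.mk (cycIdeal p m) (D N)
        = (Ideal.Quotient.mk (cycIdeal p m) (PowerSeries.trunc N f)
          * Ideal.Quotient.mk (cycIdeal p m) (PowerSeries.trunc N g))
          - Ideal.Quotient.mk (cycIdeal p m) (PowerSeries.trunc N (f * g)) := by
      intro N; rw [hD]; simp only; rw [map_sub, map_mul]
    apply Tendsto.congr hmk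
    rw [(inducing_coords p m).tendsto_nhds_iff]
    rw [tendsto_pi_nhds]
    intro i
    have hnorm : ∀ N, ‖coords p m (Ideal.Quotient.mk (cycIdeal p m) (D N)) i‖ ≤ bnd p m N := by
      intro N
      rw [coords, rep_mk, modByMonic_coeff]
      apply IsUltrametricDist.norm_sum_le_of_forall_le_of_nonneg (bnd_nonneg p m N)
      intro n hn
      have hnN : N ≤ n := by
        by_contra hcon
        exact (Polynomial.mem_support_iff.mp hn) (hcoeff N n (by omega))
      rw [norm_mul]
      calc ‖(D N).coeff n‖ * ‖cf p m n i‖ ≤ 1 * bnd p m n :=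
            mul_le_mul (PadicInt.norm_le_one _) (norm_cf_le p m n i) (norm_nonneg _) zero_le_one
        _ = bnd p m n := one_mul _
        _ ≤ bnd p m N := bnd_anti p m hnN
    have hz := squeeze_zero_norm hnorm (tendsto_bnd p m)
    rw [coords_zero]
    exact hz
  have h4 : Tendsto (fun N => Ideal.Quotient.mk (cycIdeal p m) (PowerSeries.trunc N (f * g)))
      atTop (𝓝 (phi p m f * phi p m g)) := by
    have h5 := h1.sub h3
    rw [sub_zero] at h5
    apply Tendsto.congr ?_ h5
    intro N; ring
  exact tendsto_nhds_unique h2 h4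

/-! ### compatibility and the ring hom to the limit -/

lemma cycTrans_eq {m' m : ℕ} (h : m' ≤ m) (x : Polynomial ℤ_[p] ⧸ cycIdeal p m) :
    cycTrans p h x = Ideal.Quotient.mk (cycIdeal p m') (rep p x) := by
  conv_lhs => rw [← mk_rep p x]
  rw [cycTrans, Ideal.Quotient.factor_mk]

lemma continuous_cycTrans {m' m : ℕ} (h : m' ≤ m) : Continuous (cycTrans p h) := by
  have heq : ⇑(cycTrans p h) = fun x => Ideal.Quotient.mk (cycIdeal p m') (rep p x) :=
    funext (cycTrans_eq p h)
  rw [heq]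
  exact (continuous_mkq p m').comp (continuous_rep p m)

lemma phi_compat {m' m : ℕ} (h : m' ≤ m) (f : PowerSeries ℤ_[p]) :
    cycTrans p h (phi p m f) = phi p m' f := by
  have h1 : Tendsto
      (fun N => cycTrans p h (Ideal.Quotient.mk (cycIdeal p m) (PowerSeries.trunc N f)))
      atTop (𝓝 (cycTrans p h (phi p m f))) :=
    ((continuous_cycTrans p h).tendsto _).comp (tendsto_trunc p m f)
  have h2 : (fun N => cycTrans p h (Ideal.Quotient.mk (cycIdeal p m) (PowerSeries.trunc N f)))
      = fun N => Ideal.Quotient.mk (cycIdeal p m') (PowerSeries.trunc N f) := by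
    funext N; rw [cycTrans, Ideal.Quotient.factor_mk]
  rw [h2] at h1
  exact tendsto_nhds_unique h1 (tendsto_trunc p m' f)

lemma mem_cycLimit (x : ∀ m, Polynomial ℤ_[p] ⧸ cycIdeal p m) :
    x ∈ cycLimit p ↔ ∀ (m' m : ℕ) (h : m' ≤ m), cycTrans p h (x m) = x m' := Iff.rfl

def eHom : PowerSeries ℤ_[p] →+* ↥(cycLimit p) where
  toFun f := ⟨fun m => phi p m f, (mem_cycLimit p _).mpr fun m' m h => phi_compat p h f⟩
  map_one' := Subtype.ext (funext fun m => phi_one p m)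
  map_mul' f g := Subtype.ext (funext fun m => phi_mul p m f g)
  map_zero' := Subtype.ext (funext fun m => phi_zero p m)
  map_add' f g := Subtype.ext (funext fun m => phi_add p m f g)

lemma continuous_phi (m : ℕ) : Continuous (phi p m) := by
  rw [(inducing_coords p m).continuous_iff]
  apply continuous_pi
  intro i
  by_cases hi : i < p ^ m
  · have heq : (fun f : PowerSeries ℤ_[p] => (coords p m ∘ phi p m) f i)
        = (fun a : ℕ → ℤ_[p] => ∑' n, a n * cf p m n i)
          ∘ (fun f : PowerSeries ℤ_[p] => fun n => PowerSeries.coeff n f) := by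
      funext f
      show coords p m (phi p m f) i = ∑' n, PowerSeries.coeff n f * cf p m n i
      rw [coords_phi, if_pos hi, Sc]
    exact heq ▸ (continuous_tsum_mul p (norm_cf_tendsto p m i)).comp (continuous_psCoeffs p)
  · have heq : (fun f : PowerSeries ℤ_[p] => (coords p m ∘ phi p m) f i)
        = fun _ => (0 : ℤ_[p]) := by
      funext f
      show coords p m (phi p m f) i = 0
      rw [coords_phi, if_neg hi]
    exact heq ▸ continuous_const

lemma continuous_eHom : Continuous (eHom p) := by
  apply Continuous.subtype_mk
  exact continuous_pi fun m => continuous_phi p m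

/-! ### injectivity -/

lemma phi_eq_zero_imp (f : PowerSeries ℤ_[p]) (hf : ∀ m, phi p m f = 0) : f = 0 := by
  have main : ∀ j : ℕ, ∀ i : ℕ, ‖PowerSeries.coeff i f‖ ≤ (p : ℝ) ^ (-(j : ℤ)) := by
    intro j
    induction j with
    | zero => intro i; simpa using PadicInt.norm_le_one _
    | succ j ih =>
      intro i
      have hi : i < p ^ i := Nat.lt_pow_self (pp p).one_lt
      have hS : Sc p i i f = 0 := by
        have h0 := congrFun (congrArg (coords p i) (hf i)) i
        rw [coords_phi, if_pos hi, coords_zero] at h0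
        exact h0
      have hsum := summable_mul_cf p i i (fun n => PowerSeries.coeff n f)
      have hsplit : (∑ n ∈ Finset.range (p ^ i), PowerSeries.coeff n f * cf p i n i)
          + ∑' k, PowerSeries.coeff (k + p ^ i) f * cf p i (k + p ^ i) i
          = ∑' n, PowerSeries.coeff n f * cf p i n i := by
        simpa using Summable.sum_add_tsum_nat_add
          (f := fun n => PowerSeries.coeff n f * cf p i n i) (p ^ i) hsum
      have hfin : ∑ n ∈ Finset.range (p ^ i), PowerSeries.coeff n f * cf p i n i
          = PowerSeries.coeff i f := by
        have hterm : ∀ n ∈ Finset.range (p ^ i), PowerSeries.coeff n f * cf p i n i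
            = if i = n then PowerSeries.coeff n f else 0 := by
          intro n hn
          rw [cf_of_lt p i i (Finset.mem_range.mp hn), mul_ite, mul_one, mul_zero]
        rw [Finset.sum_congr rfl hterm,
          Finset.sum_ite_eq (Finset.range (p ^ i)) i (fun n => PowerSeries.coeff n f),
          if_pos (Finset.mem_range.mpr hi)]
      have hzero : PowerSeries.coeff i f
          + ∑' k, PowerSeries.coeff (k + p ^ i) f * cf p i (k + p ^ i) i = 0 := by
        rw [← hfin, hsplit]
        exact hS
      have hcoeff_eq : PowerSeries.coeff i f
          = -∑' k, PowerSeries.coeff (k + p ^ i) f * cf p i (k + p ^ i) i :=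
        eq_neg_of_add_eq_zero_left hzero
      have hpow : (p : ℝ) ^ (-(j : ℤ)) * (p : ℝ) ^ (-1 : ℤ) = (p : ℝ) ^ (-((j + 1 : ℕ) : ℤ)) := by
        rw [← zpow_add₀ (by exact_mod_cast (pp p).ne_zero : (p : ℝ) ≠ 0)]
        congr 1
        push_cast
        ring
      rw [hcoeff_eq, norm_neg, ← hpow]
      apply norm_tsum_le p (by positivity)
      intro k
      rw [norm_mul]
      apply mul_le_mul (ih _) ?_ (norm_nonneg _) (by positivity)
      calc ‖cf p i (k + p ^ i) i‖ ≤ bnd p i (k + p ^ i) := norm_cf_le p i _ i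
        _ ≤ (p : ℝ) ^ (-1 : ℤ) := by
            rw [bnd]
            apply zpow_le_zpow_right₀ (by exact_mod_cast (pp p).one_lt.le)
            simp only [neg_le_neg_iff]
            exact_mod_cast (Nat.le_div_iff_mul_le (pow_pos (pp p).pos i)).mpr (by omega)
  apply PowerSeries.ext
  intro n
  have hlim : Tendsto (fun j : ℕ => (p : ℝ) ^ (-(j : ℤ))) atTop (𝓝 0) := by
    have := tendsto_bnd p 0
    simpa [bnd, Nat.div_one] using this
  have h0 : ‖PowerSeries.coeff n f‖ ≤ 0 := ge_of_tendsto' hlim (fun j => main j n)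
  rw [map_zero]
  exact norm_le_zero_iff.mp h0

lemma eHom_injective : Function.Injective (eHom p) := by
  intro f g hfg
  have h0 : ∀ m, phi p m (f - g) = 0 := by
    intro m
    have hc : phi p m f = phi p m g := congrFun (congrArg Subtype.val hfg) m
    have hsub : phi p m (f - g) = phi p m f - phi p m g := by
      have hadd := phi_add p m (f - g) g
      rw [sub_add_cancel] at hadd
      rw [hadd]; ring
    rw [hsub, hc, sub_self]
  exact sub_eq_zero.mp (phi_eq_zero_imp p (f - g) h0)

/-! ### compactness and surjectivity -/

def psEquiv : PowerSeries ℤ_[p] ≃ (ℕ → ℤ_[p]) where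
  toFun := fun f n => PowerSeries.coeff n f
  invFun := PowerSeries.mk
  left_inv := fun f => PowerSeries.ext fun n => by simp [PowerSeries.coeff_mk]
  right_inv := fun a => funext fun n => by simp [PowerSeries.coeff_mk]

lemma inducing_ps : Topology.IsInducing (psEquiv p) := by
  constructor
  have hcoe : ⇑(psEquiv p) = fun f n => PowerSeries.coeff n f := rfl
  rw [hcoe]
  rfl

instance : CompactSpace (PowerSeries ℤ_[p]) :=
  (((psEquiv p).toHomeomorphOfIsInducing (inducing_ps p)).symm).compactSpace

lemma eHom_surjective : Function.Surjective (eHom p) := by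
  have hclosed : IsClosed (Set.range (eHom p)) :=
    (isCompact_range (continuous_eHom p)).isClosed
  intro q
  have hq : ∀ (m' m : ℕ) (h : m' ≤ m), cycTrans p h (q.1 m) = q.1 m' :=
    (mem_cycLimit p q.1).mp q.2
  have happrox : Tendsto
      (fun m => eHom p ((rep p (q.1 m) : Polynomial ℤ_[p]) : PowerSeries ℤ_[p]))
      atTop (𝓝 q) := by
    rw [Topology.IsInducing.subtypeVal.tendsto_nhds_iff]
    rw [tendsto_pi_nhds]
    intro j
    apply tendsto_atTop_of_eventually_const (i₀ := j)
    intro m hm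
    show phi p j ((rep p (q.1 m) : Polynomial ℤ_[p]) : PowerSeries ℤ_[p]) = q.1 j
    rw [phi_coe, ← hq j m hm, cycTrans_eq]
  exact hclosed.mem_of_tendsto happrox
    (Filter.Eventually.of_forall fun m => Set.mem_range_self _)

/-! ### the equivalence -/

def eEquiv : PowerSeries ℤ_[p] ≃+* ↥(cycLimit p) :=
  RingEquiv.ofBijective (eHom p) ⟨eHom_injective p, eHom_surjective p⟩

lemma eEquiv_coe : ⇑(eEquiv p) = ⇑(eHom p) := rfl

lemma continuous_eEquiv : Continuous (eEquiv p) := by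
  rw [eEquiv_coe]; exact continuous_eHom p

def eHomeo : PowerSeries ℤ_[p] ≃ₜ ↥(cycLimit p) :=
  Continuous.homeoOfEquivCompactToT2 (f := (eEquiv p).toEquiv) (continuous_eEquiv p)

lemma continuous_eEquiv_symm : Continuous (eEquiv p).symm := by
  have h := (eHomeo p).symm.continuous
  exact h

/-! ### Part 2: group algebras -/

instance instNeZeroPow (m : ℕ) : NeZero (p ^ m) := ⟨pow_ne_zero m (pp p).ne_zero⟩

def sg (m : ℕ) : AddMonoidAlgebra ℤ_[p] (ZMod (p ^ m)) :=
  AddMonoidAlgebra.single 1 1 - 1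

def θ (m : ℕ) : Polynomial ℤ_[p] →+* AddMonoidAlgebra ℤ_[p] (ZMod (p ^ m)) :=
  eval₂RingHom AddMonoidAlgebra.singleZeroRingHom (sg p m)

lemma one_add_sg (m : ℕ) : 1 + sg p m = AddMonoidAlgebra.single 1 1 := by rw [sg]; ring

lemma single_one_pow (m k : ℕ) : (AddMonoidAlgebra.single (1 : ZMod (p ^ m)) (1 : ℤ_[p])) ^ k
    = AddMonoidAlgebra.single ((k : ZMod (p ^ m))) 1 := by
  rw [AddMonoidAlgebra.single_pow, one_pow, nsmul_eq_mul, mul_one]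

lemma θ_X (m : ℕ) : θ p m Polynomial.X = sg p m := by
  rw [θ, coe_eval₂RingHom, eval₂_X]

lemma θ_C (m : ℕ) (a : ℤ_[p]) : θ p m (Polynomial.C a) = AddMonoidAlgebra.single 0 a := by
  rw [θ, coe_eval₂RingHom, eval₂_C]
  rfl

lemma θ_ω (m : ℕ) : θ p m (ω p m) = 0 := by
  rw [ω, map_sub, map_pow, map_add, map_one, θ_X, one_add_sg, single_one_pow,
    ZMod.natCast_self, ← AddMonoidAlgebra.one_def, sub_self]

def βh (m : ℕ) : (Polynomial ℤ_[p] ⧸ cycIdeal p m) →+* AddMonoidAlgebra ℤ_[p] (ZMod (p ^ m)) :=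
  Ideal.Quotient.lift _ (θ p m) (by
    intro a ha
    rw [cycIdeal_eq, Ideal.mem_span_singleton] at ha
    obtain ⟨t, rfl⟩ := ha
    rw [map_mul, θ_ω, zero_mul])

lemma βh_mk (m : ℕ) (h : Polynomial ℤ_[p]) :
    βh p m (Ideal.Quotient.mk (cycIdeal p m) h) = θ p m h := Ideal.Quotient.lift_mk _ _ _

lemma one_add_u_pow (m : ℕ) :
    (1 + Ideal.Quotient.mk (cycIdeal p m) Polynomial.X) ^ p ^ m = 1 := by
  have h1 : (1 + Ideal.Quotient.mk (cycIdeal p m) Polynomial.X)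
      = Ideal.Quotient.mk (cycIdeal p m) (1 + Polynomial.X) := by rw [map_add, map_one]
  have h2 : Ideal.Quotient.mk (cycIdeal p m) (ω p m) = 0 :=
    Ideal.Quotient.eq_zero_iff_mem.mpr (ω_mem p m)
  rw [ω, map_sub, map_one, sub_eq_zero] at h2
  rw [h1, ← map_pow, h2]

lemma pow_val_mod (m k : ℕ) :
    (1 + Ideal.Quotient.mk (cycIdeal p m) Polynomial.X) ^ (k % p ^ m)
      = (1 + Ideal.Quotient.mk (cycIdeal p m) Polynomial.X) ^ k := by
  conv_rhs => rw [show k = p ^ m * (k / p ^ m) + k % p ^ m from (Nat.div_add_mod k (p ^ m)).symm]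
  rw [pow_add, pow_mul, one_add_u_pow, one_pow, one_mul]

def χ (m : ℕ) : Multiplicative (ZMod (p ^ m)) →* (Polynomial ℤ_[p] ⧸ cycIdeal p m) where
  toFun x := (1 + Ideal.Quotient.mk (cycIdeal p m) Polynomial.X) ^ (Multiplicative.toAdd x).val
  map_one' := by
    show (1 + Ideal.Quotient.mk (cycIdeal p m) Polynomial.X)
      ^ (Multiplicative.toAdd (1 : Multiplicative (ZMod (p ^ m)))).val = 1
    rw [toAdd_one, ZMod.val_zero, pow_zero]
  map_mul' x y := by
    show (1 + Ideal.Quotient.mk (cycIdeal p m) Polynomial.X) ^ (Multiplicative.toAdd (x * y)).val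
      = (1 + Ideal.Quotient.mk (cycIdeal p m) Polynomial.X) ^ (Multiplicative.toAdd x).val
        * (1 + Ideal.Quotient.mk (cycIdeal p m) Polynomial.X) ^ (Multiplicative.toAdd y).val
    rw [toAdd_mul, ZMod.val_add, pow_val_mod, pow_add]

def ℓh (m : ℕ) : AddMonoidAlgebra ℤ_[p] (ZMod (p ^ m)) →+* (Polynomial ℤ_[p] ⧸ cycIdeal p m) :=
  ((AddMonoidAlgebra.lift ℤ_[p] _ (ZMod (p ^ m))) (χ p m)).toRingHom

lemma ℓh_single (m : ℕ) (a : ZMod (p ^ m)) (b : ℤ_[p]) :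
    ℓh p m (AddMonoidAlgebra.single a b)
      = b • (1 + Ideal.Quotient.mk (cycIdeal p m) Polynomial.X) ^ a.val := by
  show (AddMonoidAlgebra.lift ℤ_[p] _ (ZMod (p ^ m))) (χ p m) (AddMonoidAlgebra.single a b) = _
  rw [AddMonoidAlgebra.lift_single]
  rfl

lemma smul_one_eq (m : ℕ) (a : ℤ_[p]) :
    a • (1 : Polynomial ℤ_[p] ⧸ cycIdeal p m)
      = Ideal.Quotient.mk (cycIdeal p m) (Polynomial.C a) := by
  show a • Submodule.Quotient.mk 1 = _
  rw [← Submodule.Quotient.mk_smul, smul_eq_C_mul, mul_one]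
  rfl

lemma pow_val_one (m : ℕ) :
    (1 + Ideal.Quotient.mk (cycIdeal p m) Polynomial.X) ^ ((1 : ZMod (p ^ m)).val)
      = 1 + Ideal.Quotient.mk (cycIdeal p m) Polynomial.X := by
  by_cases h1 : p ^ m = 1
  · have hX : Ideal.Quotient.mk (cycIdeal p m) Polynomial.X = 0 := by
      apply Ideal.Quotient.eq_zero_iff_mem.mpr
      have hXω : (Polynomial.X : Polynomial ℤ_[p]) = ω p m := by
        rw [ω, h1, pow_one, add_sub_cancel_left]
      rw [hXω]; exact ω_mem p m
    rw [hX]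
    simp
  · haveI : Fact (1 < p ^ m) :=
      ⟨lt_of_le_of_ne (Nat.one_le_iff_ne_zero.mpr (NeZero.ne _)) (Ne.symm h1)⟩
    rw [ZMod.val_one, pow_one]

lemma ℓβ (m : ℕ) : (ℓh p m).comp (βh p m) = RingHom.id _ := by
  apply Ideal.Quotient.ringHom_ext
  apply Polynomial.ringHom_ext
  · intro a
    simp only [RingHom.comp_apply, RingHom.id_apply]
    rw [βh_mk, θ_C, ℓh_single, ZMod.val_zero, pow_zero, smul_one_eq]
  · simp only [RingHom.comp_apply, RingHom.id_apply]
    rw [βh_mk, θ_X, sg, map_sub, map_one, ℓh_single, one_smul, pow_val_one]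
    ring

lemma βℓ (m : ℕ) : (βh p m).comp (ℓh p m) = RingHom.id _ := by
  apply AddMonoidAlgebra.ringHom_ext
  · intro b
    simp only [RingHom.comp_apply, RingHom.id_apply]
    rw [ℓh_single, ZMod.val_zero, pow_zero, smul_one_eq, βh_mk, θ_C]
  · intro a
    simp only [RingHom.comp_apply, RingHom.id_apply]
    rw [ℓh_single, one_smul, map_pow]
    have h1 : βh p m (1 + Ideal.Quotient.mk (cycIdeal p m) Polynomial.X)
        = AddMonoidAlgebra.single 1 1 := by
      rw [map_add, map_one, βh_mk, θ_X, one_add_sg]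
    rw [h1, single_one_pow]
    congr 1
    exact ZMod.natCast_rightInverse a

def βe (m : ℕ) : (Polynomial ℤ_[p] ⧸ cycIdeal p m) ≃+* AddMonoidAlgebra ℤ_[p] (ZMod (p ^ m)) :=
  RingEquiv.ofRingHom (βh p m) (ℓh p m) (βℓ p m) (ℓβ p m)

lemma grpTrans_single {m' m : ℕ} (h : m' ≤ m) (a : ZMod (p ^ m)) (b : ℤ_[p]) :
    grpTrans p h (AddMonoidAlgebra.single a b)
      = AddMonoidAlgebra.single (ZMod.castHom (pow_dvd_pow p h) (ZMod (p ^ m')) a) b := by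
  simp [grpTrans, AddMonoidAlgebra.mapDomainRingHom, Finsupp.mapDomain_single]

lemma β_compat {m' m : ℕ} (h : m' ≤ m) :
    (grpTrans p h).comp (βh p m) = (βh p m').comp (cycTrans p h) := by
  apply Ideal.Quotient.ringHom_ext
  apply Polynomial.ringHom_ext
  · intro a
    simp only [RingHom.comp_apply]
    rw [βh_mk, θ_C, cycTrans, Ideal.Quotient.factor_mk, βh_mk, θ_C, grpTrans_single, map_zero]
  · simp only [RingHom.comp_apply]
    rw [βh_mk, θ_X, cycTrans, Ideal.Quotient.factor_mk, βh_mk, θ_X, sg, sg, map_sub, map_one,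
      grpTrans_single, map_one]

lemma mem_grpLimit (x : ∀ m, AddMonoidAlgebra ℤ_[p] (ZMod (p ^ m))) :
    x ∈ grpLimit p ↔ ∀ (m' m : ℕ) (h : m' ≤ m), grpTrans p h (x m) = x m' := Iff.rfl

def Γe : ↥(cycLimit p) ≃+* ↥(grpLimit p) where
  toFun x := ⟨fun m => βe p m (x.1 m), (mem_grpLimit p _).mpr (by
    intro m' m h
    have hx := (mem_cycLimit p x.1).mp x.2 m' m h
    have hsq := RingHom.congr_fun (β_compat p h) (x.1 m)
    simp only [RingHom.comp_apply] at hsq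
    show grpTrans p h (βh p m (x.1 m)) = βh p m' (x.1 m')
    rw [hsq, hx])⟩
  invFun y := ⟨fun m => (βe p m).symm (y.1 m), (mem_cycLimit p _).mpr (by
    intro m' m h
    have hy := (mem_grpLimit p y.1).mp y.2 m' m h
    apply (βe p m').injective
    have hsq := RingHom.congr_fun (β_compat p h) ((βe p m).symm (y.1 m))
    simp only [RingHom.comp_apply] at hsq
    show βh p m' (cycTrans p h ((βe p m).symm (y.1 m))) = βe p m' ((βe p m').symm (y.1 m'))
    rw [← hsq, (βe p m').apply_symm_apply]
    show grpTrans p h (βe p m ((βe p m).symm (y.1 m))) = y.1 m'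
    rw [(βe p m).apply_symm_apply, hy])⟩
  left_inv x := Subtype.ext (funext fun m => (βe p m).symm_apply_apply (x.1 m))
  right_inv y := Subtype.ext (funext fun m => (βe p m).apply_symm_apply (y.1 m))
  map_mul' x y := Subtype.ext (funext fun m => map_mul (βe p m) (x.1 m) (y.1 m))
  map_add' x y := Subtype.ext (funext fun m => map_add (βe p m) (x.1 m) (y.1 m))

/-! ### continuity on the group-algebra side -/

lemma natDegree_rep_lt (m : ℕ) (q : Polynomial ℤ_[p] ⧸ cycIdeal p m) :
    (rep p q).natDegree < p ^ m := by
  rcases eq_or_ne (rep p q) 0 with h | h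
  · rw [h, natDegree_zero]; exact pow_pos (pp p).pos m
  · exact (natDegree_lt_iff_degree_lt h).mpr (degree_rep_lt p m q)

lemma βh_eq_sum (m : ℕ) (q : Polynomial ℤ_[p] ⧸ cycIdeal p m) :
    βh p m q = ∑ i ∈ Finset.range (p ^ m),
      AddMonoidAlgebra.single 0 (coords p m q i) * sg p m ^ i := by
  conv_lhs => rw [← mk_rep p q]
  rw [βh_mk, θ, coe_eval₂RingHom, eval₂_eq_sum_range' _ (natDegree_rep_lt p m q) (sg p m)]
  rfl

instance (m : ℕ) : T2Space (AddMonoidAlgebra ℤ_[p] (ZMod (p ^ m))) :=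
  Topology.IsEmbedding.t2Space
    (f := fun f : AddMonoidAlgebra ℤ_[p] (ZMod (p ^ m)) => (f.coeff : ZMod (p ^ m) → ℤ_[p]))
    ⟨⟨rfl⟩, fun a b hab => AddMonoidAlgebra.coeff_injective
      (DFunLike.coe_injective (F := ZMod (p ^ m) →₀ ℤ_[p]) hab)⟩

lemma continuous_βh (m : ℕ) : Continuous (βh p m) := by
  apply continuous_induced_rng.mpr
  simp only [Function.comp_def]
  apply continuous_pi
  intro g
  have heq : (fun q : Polynomial ℤ_[p] ⧸ cycIdeal p m =>
        ((βh p m q : AddMonoidAlgebra ℤ_[p] (ZMod (p ^ m))).coeff : ZMod (p ^ m) → ℤ_[p]) g)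
      = fun q => ∑ i ∈ Finset.range (p ^ m), coords p m q i
          * (((sg p m ^ i : AddMonoidAlgebra ℤ_[p] (ZMod (p ^ m)))).coeff : ZMod (p ^ m) → ℤ_[p]) g := by
    funext q
    rw [βh_eq_sum, AddMonoidAlgebra.coeff_sum, Finsupp.coe_finset_sum, Finset.sum_apply]
    apply Finset.sum_congr rfl
    intro i _
    simp [AddMonoidAlgebra.coeff_single_zero_mul]
  rw [heq]
  exact continuous_finset_sum _ fun i _ =>
    ((continuous_apply i).comp (continuous_coords p m)).mul continuous_const

lemma continuous_Γe : Continuous (Γe p) := by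
  apply Continuous.subtype_mk
  apply continuous_pi
  intro m
  exact (continuous_βh p m).comp ((continuous_apply m).comp continuous_subtype_val)

def e2 : PowerSeries ℤ_[p] ≃+* ↥(grpLimit p) := (eEquiv p).trans (Γe p)

lemma continuous_e2 : Continuous (e2 p) := (continuous_Γe p).comp (continuous_eEquiv p)

def e2Homeo : PowerSeries ℤ_[p] ≃ₜ ↥(grpLimit p) :=
  Continuous.homeoOfEquivCompactToT2 (f := (e2 p).toEquiv) (continuous_e2 p)

lemma continuous_e2_symm : Continuous (e2 p).symm := (e2Homeo p).symm.continuous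

end Iw


/-- `ℤ_p[[T]]` is isomorphic, as a topological ring, to the inverse limit
`lim_m ℤ_p[X]/((1+X)^{p^m} - 1)`, via `T ↦ (class of X)_m`; equivalently, it is isomorphic
to the inverse limit of the group algebras `lim_m ℤ_p[ℤ/p^mℤ]`, via
`T ↦ (generator - 1)_m`. -/
theorem stmt_10 :
    (∃ e : PowerSeries ℤ_[p] ≃+* cycLimit p,
      Continuous e ∧ Continuous e.symm ∧
      ∀ m : ℕ,
        ((e PowerSeries.X : cycLimit p) : ∀ m, Polynomial ℤ_[p] ⧸ cycIdeal p m) m =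
          Ideal.Quotient.mk (cycIdeal p m) Polynomial.X) ∧
    (∃ e : PowerSeries ℤ_[p] ≃+* grpLimit p,
      Continuous e ∧ Continuous e.symm ∧
      ∀ m : ℕ,
        ((e PowerSeries.X : grpLimit p) : ∀ m, AddMonoidAlgebra ℤ_[p] (ZMod (p ^ m))) m =
          AddMonoidAlgebra.single (1 : ZMod (p ^ m)) (1 : ℤ_[p]) - 1) := by
  constructor
  · refine ⟨Iw.eEquiv p, Iw.continuous_eEquiv p, Iw.continuous_eEquiv_symm p, fun m => ?_⟩
    show Iw.phi p m PowerSeries.X = _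
    exact Iw.phi_X p m
  · refine ⟨Iw.e2 p, Iw.continuous_e2 p, Iw.continuous_e2_symm p, fun m => ?_⟩
    show Iw.βh p m (Iw.phi p m PowerSeries.X) = _
    rw [Iw.phi_X, Iw.βh_mk, Iw.θ_X]
    rfl

end
end
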